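/- arXiv:1509.03616 — 2 statements merged into one kernel-verified Lean document; each statement's English description precedes it below -/
import Mathlib

section
/- Let p > 0, C > 0, let f : ℝ^d → ℝ be convex and differentiable attaining its minimum f* at x*, and let h : ℝ^d → ℝ be convex and differentiable. Let X : [0, ∞) → ℝ^d be a curve, twice continuously differentiable on (0, ∞), satisfying the Nesterov flow d/dt ∇h(X_t + (t/p) Ẋ_t) = −C p t^{p−1} ∇f(X_t) for t > 0, and such that t ↦ X_t + (t/p) Ẋ_t extends continuously to t = 0 with value X_0. Then for all t > 0, f(X_t) − f* ≤ D_h(x*, X_0) / (C t^p). -/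
open scoped RealInnerProductSpace
open Real Set

noncomputable section

lemma grad_ineq {d : ℕ} (φ : EuclideanSpace ℝ (Fin d) → ℝ)
    (hconv : ConvexOn ℝ Set.univ φ) (hd : Differentiable ℝ φ)
    (x y : EuclideanSpace ℝ (Fin d)) :
    φ x + ⟪gradient φ x, y - x⟫ ≤ φ y := by
  set q : ℝ → ℝ := fun r => φ (r • (y - x) + x) with hq
  have hc : HasDerivAt q ⟪gradient φ x, y - x⟫ 0 := by
    have hcurve : HasDerivAt (fun r : ℝ => r • (y - x) + x) (y - x) 0 := by
      simpa using ((hasDerivAt_id (0:ℝ)).smul_const (y - x)).add_const x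
    have h0 : ((0:ℝ) • (y - x) + x) = x := by simp
    have := ((hd ((0:ℝ) • (y - x) + x)).hasGradientAt.hasFDerivAt).comp_hasDerivAt 0 hcurve
    rw [h0] at this
    simp [InnerProductSpace.toDual_apply_apply] at this ⊢
    exact this
  have hqc : ConvexOn ℝ Set.univ q := by
    have := hconv.comp_affineMap (AffineMap.lineMap x y : ℝ →ᵃ[ℝ] EuclideanSpace ℝ (Fin d))
    have heq : (φ ∘ (AffineMap.lineMap x y : ℝ →ᵃ[ℝ] EuclideanSpace ℝ (Fin d))) = q := by
      funext r
      simp [hq, AffineMap.lineMap_apply, vsub_eq_sub, vadd_eq_add]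
    have hpre : ((AffineMap.lineMap x y : ℝ →ᵃ[ℝ] EuclideanSpace ℝ (Fin d)) ⁻¹' Set.univ) = Set.univ := by simp
    rw [heq, hpre] at this
    exact this
  have hslope := hqc.le_slope_of_hasDerivAt (Set.mem_univ (0:ℝ)) (Set.mem_univ (1:ℝ)) one_pos hc
  rw [slope_def_field] at hslope
  have h1 : q 1 = φ y := by simp [hq]
  have h0 : q 0 = φ x := by simp [hq]
  rw [h1, h0] at hslope
  have : ⟪gradient φ x, y - x⟫ ≤ φ y - φ x := by
    simpa using hslope
  linarith


/-- Bregman divergence `D_h(y, x) = h(y) − h(x) − ⟨∇h(x), y − x⟩`. -/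
def breg (d : ℕ) (h : EuclideanSpace ℝ (Fin d) → ℝ)
    (y x : EuclideanSpace ℝ (Fin d)) : ℝ :=
  h y - h x - ⟪gradient h x, y - x⟫

theorem nesterov_flow_rate
    (d : ℕ) (p C : ℝ) (hp : 0 < p) (hC : 0 < C)
    (f h : EuclideanSpace ℝ (Fin d) → ℝ)
    (hconv : ConvexOn ℝ Set.univ f) (hf : Differentiable ℝ f)
    (hhconv : ConvexOn ℝ Set.univ h) (hh : Differentiable ℝ h)
    (xstar : EuclideanSpace ℝ (Fin d)) (hmin : ∀ x, f xstar ≤ f x)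
    (X X' X'' Z : ℝ → EuclideanSpace ℝ (Fin d))
    (hXcont : ContinuousOn X (Set.Ici 0))
    (hX : ∀ t ∈ Set.Ioi (0 : ℝ), HasDerivAt X (X' t) t)
    (hX' : ∀ t ∈ Set.Ioi (0 : ℝ), HasDerivAt X' (X'' t) t)
    (hZ : ∀ t ∈ Set.Ioi (0 : ℝ), Z t = X t + (t / p) • X' t)
    (hZ0 : Z 0 = X 0)
    (hZcont : ContinuousWithinAt Z (Set.Ici 0) 0)
    (hflow : ∀ t ∈ Set.Ioi (0 : ℝ),
      HasDerivAt (fun s => gradient h (Z s)) (-(C * p * t ^ (p - 1)) • gradient f (X t)) t) :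
    ∀ t : ℝ, 0 < t → f (X t) - f xstar ≤ breg d h xstar (X 0) / (C * t ^ p) := by
  set W : ℝ → ℝ := fun s =>
    C * s ^ p * (f (X s) - f xstar) +
      ((h xstar - h (Z s)) - ⟪gradient h (Z s), xstar - Z s⟫) with hW
  -- Step 1: derivative of W on (0,∞)
  have key : ∀ s ∈ Set.Ioi (0 : ℝ), HasDerivAt W
      (C * p * s ^ (p - 1) * ((f (X s) - f xstar) + ⟪gradient f (X s), xstar - X s⟫)) s := by
    intro s hs
    have hs' : (0:ℝ) < s := hs
    set Q : EuclideanSpace ℝ (Fin d) := (s / p) • X'' s + (1 / p) • X' s with hQ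
    have hZd : HasDerivAt Z (X' s + Q) s := by
      have base : HasDerivAt (fun u => X u + (u / p) • X' u) (X' s + Q) s := by
        have h2 := ((hasDerivAt_id s).div_const p).smul (hX' s hs)
        have h3 := (hX s hs).add h2
        simp [hQ, one_div] at h3 ⊢
        exact h3
      refine base.congr_of_eventuallyEq ?_
      exact Filter.eventuallyEq_of_mem (isOpen_Ioi.mem_nhds hs) (fun u hu => hZ u hu)
    have h2 : HasDerivAt (fun u => f (X u)) ⟪gradient f (X s), X' s⟫ s :=
      ((hf (X s)).hasGradientAt.hasFDerivAt).comp_hasDerivAt s (hX s hs)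
    have h3 : HasDerivAt (fun u => h (Z u)) ⟪gradient h (Z s), X' s + Q⟫ s :=
      ((hh (Z s)).hasGradientAt.hasFDerivAt).comp_hasDerivAt s hZd
    have h4 : HasDerivAt (fun u => ⟪gradient h (Z u), xstar - Z u⟫)
        (⟪gradient h (Z s), (0 : EuclideanSpace ℝ (Fin d)) - (X' s + Q)⟫
          + ⟪-(C * p * s ^ (p - 1)) • gradient f (X s), xstar - Z s⟫) s :=
      HasDerivAt.inner ℝ (hflow s hs) ((hasDerivAt_const s xstar).sub hZd)
    have hpow : HasDerivAt (fun u : ℝ => C * u ^ p) (C * (p * s ^ (p - 1))) s :=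
      (Real.hasDerivAt_rpow_const (Or.inl hs'.ne')).const_mul C
    have h1 : HasDerivAt (fun u => C * u ^ p * (f (X u) - f xstar))
        (C * (p * s ^ (p - 1)) * (f (X s) - f xstar)
          + C * s ^ p * ⟪gradient f (X s), X' s⟫) s :=
      hpow.mul (h2.sub_const (f xstar))
    have htot := h1.add (((hasDerivAt_const s (h xstar)).sub h3).sub h4)
    convert htot using 1
    · rfl
    · rfl
    · rfl
    have hZs := hZ s hs
    have hsp : s ^ (p - 1) * s = s ^ p := by
      rw [← Real.rpow_add_one hs'.ne' (p - 1)]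
      norm_num
    rw [hZs]
    have e1 : (xstar - (X s + (s / p) • X' s)) = (xstar - X s) - (s / p) • X' s := by
      abel
    rw [e1]
    simp only [inner_sub_right, real_inner_smul_right, real_inner_smul_left, inner_neg_left,
      zero_sub, inner_neg_right, neg_neg, neg_smul]
    simp only [PiLp.inner_apply, RCLike.inner_apply, conj_trivial]
    have hp' : p ≠ 0 := hp.ne'
    field_simp
    linear_combination (C * (∑ x : Fin d, X' s x * gradient f (X s) x)) * hsp
  -- Step 2: monotonicity of W on (0,∞)
  have Wmono : ∀ a t : ℝ, 0 < a → a ≤ t → W t ≤ W a := by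
    intro a t ha hat
    have hanti : AntitoneOn W (Icc a t) := by
      apply antitoneOn_of_deriv_nonpos (convex_Icc a t)
      · intro u hu
        exact ((key u (lt_of_lt_of_le ha hu.1)).continuousAt).continuousWithinAt
      · intro u hu
        rw [interior_Icc] at hu
        exact ((key u (ha.trans hu.1)).differentiableAt).differentiableWithinAt
      · intro u hu
        rw [interior_Icc] at hu
        have hu0 : (0:ℝ) < u := ha.trans hu.1
        rw [(key u hu0).deriv]
        have hgi := grad_ineq f hconv hf (X u) xstar
        have hcoef : 0 ≤ C * p * u ^ (p - 1) := by positivity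
        have hbr : (f (X u) - f xstar) + ⟪gradient f (X u), xstar - X u⟫ ≤ 0 := by linarith
        exact mul_nonpos_iff.2 (Or.inl ⟨hcoef, hbr⟩)
    exact hanti (left_mem_Icc.2 hat) (right_mem_Icc.2 hat) hat
  -- Step 3: bound on gradient of h near X 0
  have hbound : ∃ M : ℝ, ∀ x ∈ Metric.closedBall (X 0) 1, ‖gradient h x‖ ≤ M := by
    obtain ⟨B, hB⟩ := (isCompact_closedBall (X 0) 2).exists_bound_of_continuousOn
      (hh.continuous.continuousOn)
    have hB0 : 0 ≤ B := le_trans (norm_nonneg _) (hB (X 0) (Metric.mem_closedBall_self (by norm_num)))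
    refine ⟨B + B, fun x hx => ?_⟩
    by_cases hv : gradient h x = 0
    · rw [hv, norm_zero]; linarith
    · have hnv : ‖gradient h x‖ ≠ 0 := norm_ne_zero_iff.2 hv
      set u : EuclideanSpace ℝ (Fin d) := ‖gradient h x‖⁻¹ • gradient h x with hu
      have hun : ‖u‖ = 1 := by
        rw [hu, norm_smul, norm_inv, norm_norm]
        field_simp
      have hx2 : x ∈ Metric.closedBall (X 0) 2 := by
        rw [Metric.mem_closedBall] at hx ⊢; linarith
      have hxu2 : x + u ∈ Metric.closedBall (X 0) 2 := by
        rw [Metric.mem_closedBall] at hx ⊢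
        have htri : dist (x + u) (X 0) ≤ dist (x + u) x + dist x (X 0) := dist_triangle _ _ _
        have hd : dist (x + u) x = ‖u‖ := by
          rw [dist_eq_norm]; simp
        rw [hd, hun] at htri
        linarith
      have hgi := grad_ineq h hhconv hh x (x + u)
      have hins : ⟪gradient h x, (x + u) - x⟫ = ‖gradient h x‖ := by
        rw [add_sub_cancel_left, hu, real_inner_smul_right, real_inner_self_eq_norm_mul_norm]
        field_simp
      rw [hins] at hgi
      have hb1 := hB x hx2
      have hb2 := hB (x + u) hxu2
      have e1 : h x ≤ ‖h x‖ := le_abs_self _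
      have e2 : -‖h x‖ ≤ h x := neg_abs_le _
      have e3 : h (x + u) ≤ ‖h (x + u)‖ := le_abs_self _
      linarith
  -- neighborhood control of Z near 0
  have hZt : Filter.Tendsto Z (nhdsWithin 0 (Ici 0)) (nhds (X 0)) := by
    rw [← hZ0]; exact hZcont
  have hZball : ∀ᶠ u in nhdsWithin 0 (Ici 0), Z u ∈ Metric.closedBall (X 0) 1 :=
    hZt (Metric.closedBall_mem_nhds _ one_pos)
  obtain ⟨ε, hε, hεball⟩ : ∃ ε > 0, ∀ u : ℝ, 0 < u → u < ε → Z u ∈ Metric.closedBall (X 0) 1 := by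
    rw [eventually_nhdsWithin_iff, Metric.eventually_nhds_iff] at hZball
    obtain ⟨ε, hε0, hb⟩ := hZball
    refine ⟨ε, hε0, fun u hu0 huε => ?_⟩
    have : dist u 0 < ε := by rw [Real.dist_eq, sub_zero, abs_of_pos hu0]; exact huε
    exact hb this hu0.le
  -- the sequence
  set v : ℕ → ℝ := fun n => (ε / 2) * (1 / ((n : ℝ) + 1)) with hv
  have hvpos : ∀ n, 0 < v n := fun n => by positivity
  have hvlt : ∀ n, v n < ε := by
    intro n
    have h1 : (1:ℝ) / ((n : ℝ) + 1) ≤ 1 := by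
      rw [div_le_one (by positivity)]
      linarith [Nat.cast_nonneg (α := ℝ) n]
    have h2 := mul_le_of_le_one_right (le_of_lt (half_pos hε)) h1
    have h3 : ε / 2 < ε := by linarith
    calc v n ≤ ε / 2 := h2
    _ < ε := h3
  have hvlim : Filter.Tendsto v Filter.atTop (nhds 0) := by
    have h1 := tendsto_one_div_add_atTop_nhds_zero_nat.const_mul (ε / 2)
    simpa [hv] using h1
  obtain ⟨M, hM⟩ := hbound
  have hvmem : ∀ n, gradient h (Z (v n)) ∈ Metric.closedBall (0 : EuclideanSpace ℝ (Fin d)) M := by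
    intro n
    rw [Metric.mem_closedBall, dist_zero_right]
    exact hM _ (hεball _ (hvpos n) (hvlt n))
  obtain ⟨G, -, ψ, hψ, hGtend⟩ := tendsto_subseq_of_bounded Metric.isBounded_closedBall hvmem
  set w : ℕ → ℝ := fun n => v (ψ n) with hw
  have hwpos : ∀ n, 0 < w n := fun n => hvpos _
  have hwlim : Filter.Tendsto w Filter.atTop (nhds 0) := hvlim.comp hψ.tendsto_atTop
  have hwin : Filter.Tendsto w Filter.atTop (nhdsWithin 0 (Ici 0)) :=
    tendsto_nhdsWithin_of_tendsto_nhds_of_eventually_within _ hwlim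
      (Filter.Eventually.of_forall fun n => (hwpos n).le)
  have hZw : Filter.Tendsto (fun n => Z (w n)) Filter.atTop (nhds (X 0)) := hZt.comp hwin
  have hXw : Filter.Tendsto (fun n => X (w n)) Filter.atTop (nhds (X 0)) := by
    have h1 : Filter.Tendsto X (nhdsWithin 0 (Ici 0)) (nhds (X 0)) := hXcont 0 self_mem_Ici
    exact h1.comp hwin
  have hgw : Filter.Tendsto (fun n => gradient h (Z (w n))) Filter.atTop (nhds G) := hGtend
  -- identify the limit G with the gradient at X 0
  have hGgrad : G = gradient h (X 0) := by
    have hsub : ∀ y, h (X 0) + ⟪G, y - X 0⟫ ≤ h y := by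
      intro y
      have hn : ∀ n, h (Z (w n)) + ⟪gradient h (Z (w n)), y - Z (w n)⟫ ≤ h y :=
        fun n => grad_ineq h hhconv hh (Z (w n)) y
      have hlim : Filter.Tendsto
          (fun n => h (Z (w n)) + ⟪gradient h (Z (w n)), y - Z (w n)⟫) Filter.atTop
          (nhds (h (X 0) + ⟪G, y - X 0⟫)) :=
        ((hh.continuous.tendsto _).comp hZw).add (hgw.inner (tendsto_const_nhds.sub hZw))
      exact le_of_tendsto hlim (Filter.Eventually.of_forall hn)
    have hlm : IsLocalMin (fun y => h y - ⟪G, y⟫) (X 0) := by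
      apply Filter.Eventually.of_forall
      intro y
      have h1 := hsub y
      rw [inner_sub_right] at h1
      simp only []
      linarith
    have hfd : HasFDerivAt (fun y => h y - ⟪G, y⟫)
        ((InnerProductSpace.toDual ℝ (EuclideanSpace ℝ (Fin d)) (gradient h (X 0)) : EuclideanSpace ℝ (Fin d) →L[ℝ] ℝ)
          - InnerProductSpace.toDual ℝ (EuclideanSpace ℝ (Fin d)) G) (X 0) :=
      ((hh (X 0)).hasGradientAt.hasFDerivAt).sub
        ((InnerProductSpace.toDual ℝ (EuclideanSpace ℝ (Fin d)) G).hasFDerivAt)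
    have h0 := hlm.hasFDerivAt_eq_zero hfd
    have h1 : InnerProductSpace.toDual ℝ (EuclideanSpace ℝ (Fin d)) (gradient h (X 0) - G) = 0 := by
      rw [map_sub]; exact h0
    have h2 : gradient h (X 0) - G = 0 := by
      have h3 := congrArg (InnerProductSpace.toDual ℝ (EuclideanSpace ℝ (Fin d))).symm h1
      simpa [gradient] using h3
    exact (sub_eq_zero.mp h2).symm
  -- Step 4: limit of W along the sequence
  have hWlim : Filter.Tendsto (fun n => W (w n)) Filter.atTop (nhds (breg d h xstar (X 0))) := by
    have hpow0 : Filter.Tendsto (fun n => (w n) ^ p) Filter.atTop (nhds 0) := by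
      have hc : ContinuousAt (fun x : ℝ => x ^ p) 0 :=
        Real.continuousAt_rpow_const 0 p (Or.inr hp.le)
      have h1 := hc.tendsto.comp hwlim
      simpa [Real.zero_rpow hp.ne', Function.comp_def] using h1
    have t1 : Filter.Tendsto (fun n => C * (w n) ^ p * (f (X (w n)) - f xstar))
        Filter.atTop (nhds 0) := by
      have h1 := (hpow0.const_mul C).mul (((hf.continuous.tendsto _).comp hXw).sub_const (f xstar))
      simpa using h1
    have t2 : Filter.Tendsto
        (fun n => (h xstar - h (Z (w n))) - ⟪gradient h (Z (w n)), xstar - Z (w n)⟫)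
        Filter.atTop (nhds ((h xstar - h (X 0)) - ⟪G, xstar - X 0⟫)) :=
      (tendsto_const_nhds.sub ((hh.continuous.tendsto _).comp hZw)).sub
        (hgw.inner (tendsto_const_nhds.sub hZw))
    have h1 := t1.add t2
    rw [zero_add] at h1
    have : breg d h xstar (X 0) = (h xstar - h (X 0)) - ⟪G, xstar - X 0⟫ := by
      rw [hGgrad]; rfl
    rw [this]
    exact h1
  -- Step 5: conclusion
  intro t ht
  have hWt : W t ≤ breg d h xstar (X 0) := by
    apply ge_of_tendsto hWlim
    filter_upwards [hwlim.eventually (eventually_lt_nhds ht)] with n hn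
    exact Wmono (w n) t (hwpos n) hn.le
  have hD : 0 ≤ (h xstar - h (Z t)) - ⟪gradient h (Z t), xstar - Z t⟫ := by
    have := grad_ineq h hhconv hh (Z t) xstar
    linarith
  have hCt : 0 < C * t ^ p := by positivity
  rw [le_div_iff₀ hCt]
  have hWeq : W t = C * t ^ p * (f (X t) - f xstar) +
      ((h xstar - h (Z t)) - ⟪gradient h (Z t), xstar - Z t⟫) := rfl
  nlinarith [hWt, hD]
end
end

section
/- Let f : ℝ^d → ℝ be convex and differentiable attaining its minimum f* at x*, and let h : ℝ^d → ℝ be convex and differentiable. Let α, β : (0, ∞) → ℝ be continuously differentiable, and let X : (0, ∞) → ℝ^d be twice continuously differentiable satisfying the Bregman flow in first-order form: with Z_t = X_t + e^{−α_t} Ẋ_t, the curve satisfies d/dt ∇h(Z_t) = −e^{β_t − α_t} ∇f(X_t). Then the energy functional E_t = e^{β_t − 2α_t}(f(X_t) − f*) + D_h(x*, Z_t) satisfies Ė_t ≤ e^{β_t − 2α_t} ( β̇_t − 2α̇_t − e^{α_t} )( f(X_t) − f* ). -/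
open scoped RealInnerProductSpace
open Real Set

noncomputable section

lemma grad_inner_le {d : ℕ} {f : EuclideanSpace ℝ (Fin d) → ℝ}
    (hconv : ConvexOn ℝ Set.univ f) (hf : Differentiable ℝ f)
    (x y : EuclideanSpace ℝ (Fin d)) :
    ⟪gradient f x, y - x⟫ ≤ f y - f x := by
  set c : ℝ → EuclideanSpace ℝ (Fin d) := fun s => s • (y - x) + x with hc
  have hcd : HasDerivAt c (y - x) 0 := by
    simpa [hc] using ((hasDerivAt_id (0:ℝ)).smul_const (y - x)).add_const x
  have hc0 : c 0 = x := by simp [hc]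
  have hc1 : c 1 = y := by simp [hc]
  have hg0 : HasDerivAt (f ∘ c) ⟪gradient f x, y - x⟫ 0 := by
    have h1 : HasFDerivAt f (InnerProductSpace.toDual ℝ _ (gradient f x)) (c 0) := by
      rw [hc0]; exact (hf x).hasGradientAt.hasFDerivAt
    simpa using h1.comp_hasDerivAt 0 hcd
  have hgconv : ConvexOn ℝ Set.univ (f ∘ c) := by
    have h2 := hconv.comp_affineMap (AffineMap.lineMap x y : ℝ →ᵃ[ℝ] EuclideanSpace ℝ (Fin d))
    have h3 : f ∘ (AffineMap.lineMap x y : ℝ →ᵃ[ℝ] EuclideanSpace ℝ (Fin d)) = f ∘ c := by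
      funext s
      simp only [Function.comp_apply, AffineMap.lineMap_apply_module, hc]
      congr 1
      module
    simpa [h3] using h2
  have := hgconv.le_slope_of_hasDerivAt (mem_univ 0) (mem_univ 1) one_pos hg0
  rw [slope_def_field] at this
  simpa [hc0, hc1] using this


theorem bregman_flow_energy_derivative_bound
    (d : ℕ)
    (f h : EuclideanSpace ℝ (Fin d) → ℝ)
    (hconv : ConvexOn ℝ Set.univ f) (hf : Differentiable ℝ f)
    (hhconv : ConvexOn ℝ Set.univ h) (hh : Differentiable ℝ h)
    (xstar : EuclideanSpace ℝ (Fin d)) (hmin : ∀ x, f xstar ≤ f x)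
    (α β α' β' : ℝ → ℝ)
    (hα : ∀ t ∈ Set.Ioi (0 : ℝ), HasDerivAt α (α' t) t)
    (hβ : ∀ t ∈ Set.Ioi (0 : ℝ), HasDerivAt β (β' t) t)
    (hα'cont : ContinuousOn α' (Set.Ioi 0)) (hβ'cont : ContinuousOn β' (Set.Ioi 0))
    (X X' X'' : ℝ → EuclideanSpace ℝ (Fin d))
    (hX : ∀ t ∈ Set.Ioi (0 : ℝ), HasDerivAt X (X' t) t)
    (hX' : ∀ t ∈ Set.Ioi (0 : ℝ), HasDerivAt X' (X'' t) t)
    (hflow : ∀ t ∈ Set.Ioi (0 : ℝ),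
      HasDerivAt (fun s => gradient h (X s + Real.exp (-α s) • X' s))
        (-Real.exp (β t - α t) • gradient f (X t)) t) :
    ∀ t ∈ Set.Ioi (0 : ℝ), ∃ E' : ℝ,
      HasDerivAt
        (fun s : ℝ => Real.exp (β s - 2 * α s) * (f (X s) - f xstar) +
          breg d h xstar (X s + Real.exp (-α s) • X' s)) E' t ∧
      E' ≤ Real.exp (β t - 2 * α t) * (β' t - 2 * α' t - Real.exp (α t)) *
        (f (X t) - f xstar) := by
  intro t ht
  have hαt := hα t ht
  have hβt := hβ t ht
  have hXt := hX t ht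
  have hX't := hX' t ht
  have hflowt := hflow t ht
  -- derivative of the Z curve
  have hZ : HasDerivAt (fun s => X s + Real.exp (-α s) • X' s)
      (X' t + (Real.exp (-α t) • X'' t + (Real.exp (-α t) * (-α' t)) • X' t)) t :=
    hXt.add ((hαt.neg.exp).smul hX't)
  -- derivative of f ∘ X
  have hfX : HasDerivAt (fun s => f (X s))
      ((InnerProductSpace.toDual ℝ _ (gradient f (X t))) (X' t)) t :=
    ((hf (X t)).hasGradientAt.hasFDerivAt).comp_hasDerivAt t hXt
  -- derivative of h ∘ Z
  have hhZ : HasDerivAt (fun s => h (X s + Real.exp (-α s) • X' s))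
      ((InnerProductSpace.toDual ℝ _ (gradient h (X t + Real.exp (-α t) • X' t)))
        (X' t + (Real.exp (-α t) • X'' t + (Real.exp (-α t) * (-α' t)) • X' t))) t :=
    ((hh _).hasGradientAt.hasFDerivAt).comp_hasDerivAt t hZ
  have hinner := HasDerivAt.inner ℝ hflowt (hZ.const_sub xstar)
  have hbreg : HasDerivAt (fun s => breg d h xstar (X s + Real.exp (-α s) • X' s))
      ((0 - (InnerProductSpace.toDual ℝ _ (gradient h (X t + Real.exp (-α t) • X' t)))
        (X' t + (Real.exp (-α t) • X'' t + (Real.exp (-α t) * (-α' t)) • X' t))) -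
       (⟪gradient h (X t + Real.exp (-α t) • X' t),
          -(X' t + (Real.exp (-α t) • X'' t + (Real.exp (-α t) * (-α' t)) • X' t))⟫ +
        ⟪-Real.exp (β t - α t) • gradient f (X t),
          xstar - (X t + Real.exp (-α t) • X' t)⟫)) t := by
    simp only [breg]
    exact ((hasDerivAt_const t (h xstar)).sub hhZ).sub hinner
  have hE := (((hβt.sub (hαt.const_mul 2)).exp.mul (hfX.sub_const (f xstar)))).add hbreg
  refine ⟨_, hE, ?_⟩
  -- now bound the derivative
  simp only [InnerProductSpace.toDual_apply_apply, Pi.sub_apply, inner_neg_right, inner_neg_left, neg_smul,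
    real_inner_smul_left, zero_sub]
  have key : ⟪gradient f (X t), xstar - X t⟫ ≤ f xstar - f (X t) :=
    grad_inner_le hconv hf (X t) xstar
  have h3 : ⟪gradient f (X t), xstar - (X t + Real.exp (-α t) • X' t)⟫
      = ⟪gradient f (X t), xstar - X t⟫ - Real.exp (-α t) * ⟪gradient f (X t), X' t⟫ := by
    have e : xstar - (X t + Real.exp (-α t) • X' t)
        = (xstar - X t) - Real.exp (-α t) • X' t := by abel
    rw [e, inner_sub_right, real_inner_smul_right]
  rw [h3]
  have e1 : Real.exp (β t - α t) * Real.exp (-α t) = Real.exp (β t - 2 * α t) := by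
    rw [← Real.exp_add]; ring_nf
  have e2 : Real.exp (β t - 2 * α t) * Real.exp (α t) = Real.exp (β t - α t) := by
    rw [← Real.exp_add]; ring_nf
  have e1P : Real.exp (β t - α t) * Real.exp (-α t) * ⟪gradient f (X t), X' t⟫
      = Real.exp (β t - 2 * α t) * ⟪gradient f (X t), X' t⟫ := by rw [e1]
  have e2F : Real.exp (β t - 2 * α t) * Real.exp (α t) * (f (X t) - f xstar)
      = Real.exp (β t - α t) * (f (X t) - f xstar) := by rw [e2]
  nlinarith [mul_le_mul_of_nonneg_left key (Real.exp_pos (β t - α t)).le,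
    Real.exp_pos (β t - α t), Real.exp_pos (β t - 2 * α t), e1P, e2F]
end
end
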